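/- arXiv:1907.12805 — 3 statements merged into one kernel-verified Lean document; each statement's English description precedes it below -/
import Mathlib

section
/- For 0 < σ < 1, 1 < θ < ∞, and 0 < ρ < ∞, the a.e.-defined derivative w'_{σ,θ} belongs to L_ρ(ℝ) if and only if (1−σ)/(1−1/θ) < 1/ρ. -/
open MeasureTheory Real Set
open scoped ENNReal NNReal

noncomputable def zetaR (θ : ℝ) : ℝ := ∑' n : ℕ, ((n : ℝ) + 1) ^ (-θ)

noncomputable def aSeq (θ : ℝ) (n : ℕ) : ℝ :=
  4 * ∑ j ∈ Finset.Icc 1 (n - 1), (j : ℝ) ^ (-θ)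

noncomputable def wPiece (σ θ : ℝ) (n : ℕ) (ξ : ℝ) : ℝ :=
  if ξ < aSeq θ n + (n : ℝ) ^ (-θ) then (ξ - aSeq θ n) ^ σ
  else if ξ < aSeq θ n + 2 * (n : ℝ) ^ (-θ) then (n : ℝ) ^ (-(θ * σ))
  else if ξ < aSeq θ n + 3 * (n : ℝ) ^ (-θ) then (aSeq θ n + 3 * (n : ℝ) ^ (-θ) - ξ) ^ σ
  else 0

open Classical in
noncomputable def wFn (σ θ : ℝ) (ξ : ℝ) : ℝ :=
  if h : ∃ n : ℕ, 2 ≤ n ∧ aSeq θ n ≤ ξ ∧ ξ < aSeq θ (n + 1) then wPiece σ θ h.choose ξ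
  else 0

namespace Aux


lemma hpos (θ : ℝ) {n : ℕ} (hn : 1 ≤ n) : 0 < (n : ℝ) ^ (-θ) :=
  Real.rpow_pos_of_pos (by exact_mod_cast hn) _

lemma summable_zeta {θ : ℝ} (hθ : 1 < θ) : Summable (fun n : ℕ => ((n : ℝ) + 1) ^ (-θ)) := by
  have h1 : Summable (fun n : ℕ => (n : ℝ) ^ (-θ)) :=
    Real.summable_nat_rpow.mpr (by linarith)
  have h2 := (summable_nat_add_iff (f := fun n : ℕ => (n : ℝ) ^ (-θ)) 1).mpr h1
  convert h2 using 2 with n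
  case e'_5 => simp
  case e'_3 => rfl

lemma aSeq_eq (θ : ℝ) (n : ℕ) :
    aSeq θ n = 4 * ∑ i ∈ Finset.range (n - 1), ((i : ℝ) + 1) ^ (-θ) := by
  unfold aSeq
  rcases Nat.eq_zero_or_pos n with h | h
  · subst h; simp
  · have : n - 1 + 1 = n := Nat.succ_pred_eq_of_pos h
    rw [← Finset.Ico_add_one_right_eq_Icc, Finset.sum_Ico_eq_sum_range]
    congr 1
    rw [show (n-1) + 1 - 1 = n - 1 from rfl]
    apply Finset.sum_congr rfl
    intro i _
    push_cast
    ring_nf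

lemma aSeq_le_zeta {θ : ℝ} (hθ : 1 < θ) (n : ℕ) : aSeq θ n ≤ 4 * zetaR θ := by
  rw [aSeq_eq]
  have := Summable.sum_le_tsum (Finset.range (n - 1))
    (fun i _ => Real.rpow_nonneg (by positivity) (-θ)) (summable_zeta hθ)
  unfold zetaR
  linarith

lemma aSeq_succ (θ : ℝ) {n : ℕ} (hn : 1 ≤ n) :
    aSeq θ (n + 1) = aSeq θ n + 4 * (n : ℝ) ^ (-θ) := by
  obtain ⟨m, rfl⟩ := Nat.exists_eq_add_of_le hn
  unfold aSeq
  rw [show 1 + m + 1 - 1 = m + 1 by omega, show 1 + m - 1 = m by omega,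
    Finset.sum_Icc_succ_top (by omega)]
  push_cast
  ring

lemma aSeq_mono (θ : ℝ) {m n : ℕ} (hm : 1 ≤ m) (h : m ≤ n) : aSeq θ m ≤ aSeq θ n := by
  induction n, h using Nat.le_induction with
  | base => exact le_refl _
  | succ n hmn ih =>
    have h1 : 1 ≤ n := le_trans hm hmn
    have := hpos θ h1
    rw [aSeq_succ θ h1]
    linarith

lemma aSeq_strict (θ : ℝ) {m n : ℕ} (hm : 1 ≤ m) (h : m < n) : aSeq θ m < aSeq θ n := by
  have h1 : aSeq θ m < aSeq θ (m + 1) := by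
    have := hpos θ hm
    rw [aSeq_succ θ hm]; linarith
  exact lt_of_lt_of_le h1 (aSeq_mono θ (by omega) h)

lemma tendsto_aSeq {θ : ℝ} (hθ : 1 < θ) :
    Filter.Tendsto (fun n => aSeq θ n) Filter.atTop (nhds (4 * zetaR θ)) := by
  have h1 := (summable_zeta hθ).hasSum.tendsto_sum_nat
  have h2 : Filter.Tendsto (fun n : ℕ => n - 1) Filter.atTop Filter.atTop :=
    Filter.tendsto_sub_atTop_nat 1
  have h3 := (h1.comp h2).const_mul (4 : ℝ)
  simp only [Function.comp] at h3
  have he : (fun n : ℕ => aSeq θ n) = fun n : ℕ => 4 * ∑ i ∈ Finset.range (n - 1), ((i : ℝ) + 1) ^ (-θ) := by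
    funext n; exact aSeq_eq θ n
  rw [he]
  exact h3

lemma exists_piece {θ : ℝ} (hθ : 1 < θ) {ξ : ℝ} (h2 : aSeq θ 2 ≤ ξ) (hξ : ξ < 4 * zetaR θ) :
    ∃ n : ℕ, 2 ≤ n ∧ aSeq θ n ≤ ξ ∧ ξ < aSeq θ (n + 1) := by
  have hev : ∀ᶠ n in Filter.atTop, ξ < aSeq θ n :=
    (tendsto_aSeq hθ).eventually (eventually_gt_nhds hξ)
  obtain ⟨m, hmξ, hm2⟩ := (hev.and (Filter.eventually_ge_atTop 2)).exists
  clear hξ hev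
  induction m, hm2 using Nat.le_induction with
  | base => exact absurd hmξ (not_lt.2 h2)
  | succ m hm ih =>
    by_cases hc : aSeq θ m ≤ ξ
    · exact ⟨m, hm, hc, hmξ⟩
    · exact ih (lt_of_not_ge hc)

lemma piece_uniq (θ : ℝ) {m n : ℕ} {ξ : ℝ} (hm : 2 ≤ m) (hn : 2 ≤ n)
    (h1 : aSeq θ m ≤ ξ) (h2 : ξ < aSeq θ (m + 1))
    (h3 : aSeq θ n ≤ ξ) (h4 : ξ < aSeq θ (n + 1)) : m = n := by
  by_contra hne
  rcases lt_or_gt_of_ne hne with h | h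
  · have : aSeq θ (m + 1) ≤ aSeq θ n := aSeq_mono θ (by omega) (by omega)
    linarith
  · have : aSeq θ (n + 1) ≤ aSeq θ m := aSeq_mono θ (by omega) (by omega)
    linarith


lemma wFn_eq_piece (σ θ : ℝ) {n : ℕ} (hn : 2 ≤ n) {ξ : ℝ}
    (h1 : aSeq θ n ≤ ξ) (h2 : ξ < aSeq θ (n + 1)) : wFn σ θ ξ = wPiece σ θ n ξ := by
  have hex : ∃ k : ℕ, 2 ≤ k ∧ aSeq θ k ≤ ξ ∧ ξ < aSeq θ (k + 1) := ⟨n, hn, h1, h2⟩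
  rw [wFn, dif_pos hex]
  obtain ⟨hk2, hka, hkb⟩ := hex.choose_spec
  rw [piece_uniq θ hk2 hn hka hkb h1 h2]

lemma wFn_zero_left (σ θ : ℝ) {ξ : ℝ} (hξ : ξ < aSeq θ 2) : wFn σ θ ξ = 0 := by
  rw [wFn, dif_neg]
  rintro ⟨n, hn, h1, -⟩
  exact absurd (le_trans (aSeq_mono θ (by omega) hn) h1) (not_le.2 hξ)

lemma wFn_zero_right {σ θ : ℝ} (hθ : 1 < θ) {ξ : ℝ} (hξ : 4 * zetaR θ ≤ ξ) : wFn σ θ ξ = 0 := by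
  rw [wFn, dif_neg]
  rintro ⟨n, hn, -, h2⟩
  exact absurd (lt_of_lt_of_le h2 (aSeq_le_zeta hθ (n + 1))) (not_lt.2 hξ)

lemma deriv_wFn_left (σ θ : ℝ) {ξ : ℝ} (hξ : ξ < aSeq θ 2) : deriv (wFn σ θ) ξ = 0 := by
  have h : wFn σ θ =ᶠ[nhds ξ] fun _ => 0 :=
    Filter.eventually_of_mem (Iio_mem_nhds hξ) (fun y hy => wFn_zero_left σ θ hy)
  rw [h.deriv_eq, deriv_const]

lemma deriv_wFn_right {σ θ : ℝ} (hθ : 1 < θ) {ξ : ℝ} (hξ : 4 * zetaR θ < ξ) :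
    deriv (wFn σ θ) ξ = 0 := by
  have h : wFn σ θ =ᶠ[nhds ξ] fun _ => 0 :=
    Filter.eventually_of_mem (Ioi_mem_nhds hξ) (fun y hy => wFn_zero_right hθ (le_of_lt hy))
  rw [h.deriv_eq, deriv_const]

lemma deriv_wFn_piece (σ θ : ℝ) {n : ℕ} (hn : 2 ≤ n) {ξ : ℝ}
    (hξ : ξ ∈ Ioo (aSeq θ n) (aSeq θ (n + 1))) :
    deriv (wFn σ θ) ξ = deriv (wPiece σ θ n) ξ := by
  have h : wFn σ θ =ᶠ[nhds ξ] wPiece σ θ n :=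
    Filter.eventually_of_mem (Ioo_mem_nhds hξ.1 hξ.2)
      (fun y hy => wFn_eq_piece σ θ hn (le_of_lt hy.1) hy.2)
  exact h.deriv_eq

section derivPiece
variable (σ θ : ℝ) (n : ℕ)

local notation "a" => aSeq θ n
local notation "hh" => (n : ℝ) ^ (-θ)

lemma deriv_piece_1 (hσ : 0 < σ) {ξ : ℝ} (hξ : ξ ∈ Ioo a (a + hh)) :
    deriv (wPiece σ θ n) ξ = σ * (ξ - a) ^ (σ - 1) := by
  have hev : wPiece σ θ n =ᶠ[nhds ξ] fun y => (y - a) ^ σ := by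
    refine Filter.eventually_of_mem (Iio_mem_nhds hξ.2) (fun y hy => ?_)
    rw [wPiece, if_pos (show y < aSeq θ n + (n : ℝ) ^ (-θ) from hy)]
  rw [hev.deriv_eq]
  have hne : ξ - a ≠ 0 := ne_of_gt (sub_pos.2 hξ.1)
  have hd := (Real.hasDerivAt_rpow_const (x := ξ - a) (p := σ) (Or.inl hne)).comp ξ
    ((hasDerivAt_id ξ).sub_const a)
  simpa [Function.comp_def] using hd.deriv

lemma deriv_piece_2 {ξ : ℝ} (hξ : ξ ∈ Ioo (a + hh) (a + 2 * hh)) :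
    deriv (wPiece σ θ n) ξ = 0 := by
  have hev : wPiece σ θ n =ᶠ[nhds ξ] fun _ => (n : ℝ) ^ (-(θ * σ)) := by
    refine Filter.eventually_of_mem (Ioo_mem_nhds hξ.1 hξ.2) (fun y hy => ?_)
    rw [wPiece, if_neg (not_lt.2 (le_of_lt hy.1)), if_pos hy.2]
  rw [hev.deriv_eq, deriv_const]

lemma deriv_piece_3 (hσ : 0 < σ) (hn : 1 ≤ n) {ξ : ℝ}
    (hξ : ξ ∈ Ioo (a + 2 * hh) (a + 3 * hh)) :
    deriv (wPiece σ θ n) ξ = -(σ * (a + 3 * hh - ξ) ^ (σ - 1)) := by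
  have hp := hpos θ hn
  have hev : wPiece σ θ n =ᶠ[nhds ξ] fun y => (a + 3 * hh - y) ^ σ := by
    refine Filter.eventually_of_mem (Ioo_mem_nhds hξ.1 hξ.2) (fun y hy => ?_)
    have h1 : ¬ y < a + hh := by rcases hy with ⟨h1', h2'⟩; push_neg; nlinarith
    have h2 : ¬ y < a + 2 * hh := not_lt.2 (le_of_lt hy.1)
    rw [wPiece, if_neg h1, if_neg h2, if_pos hy.2]
  rw [hev.deriv_eq]
  have hne : a + 3 * hh - ξ ≠ 0 := ne_of_gt (sub_pos.2 hξ.2)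
  have hd := (Real.hasDerivAt_rpow_const (x := a + 3 * hh - ξ) (p := σ) (Or.inl hne)).comp ξ
    ((hasDerivAt_const ξ (a + 3 * hh)).sub (hasDerivAt_id ξ))
  have hd' : HasDerivAt (fun y => (a + 3 * hh - y) ^ σ)
      (σ * (a + 3 * hh - ξ) ^ (σ - 1) * (0 - 1)) ξ := hd
  rw [hd'.deriv]
  ring

lemma deriv_piece_4 (hn : 1 ≤ n) {ξ : ℝ}
    (hξ : ξ ∈ Ioo (a + 3 * hh) (a + 4 * hh)) :
    deriv (wPiece σ θ n) ξ = 0 := by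
  have hp := hpos θ hn
  have hev : wPiece σ θ n =ᶠ[nhds ξ] fun _ => (0 : ℝ) := by
    refine Filter.eventually_of_mem (Ioo_mem_nhds hξ.1 hξ.2) (fun y hy => ?_)
    have h1 : ¬ y < a + hh := by rcases hy with ⟨h1', h2'⟩; push_neg; nlinarith
    have h2 : ¬ y < a + 2 * hh := by rcases hy with ⟨h1', h2'⟩; push_neg; nlinarith
    have h3 : ¬ y < a + 3 * hh := not_lt.2 (le_of_lt hy.1)
    rw [wPiece, if_neg h1, if_neg h2, if_neg h3]
  rw [hev.deriv_eq, deriv_const]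

end derivPiece


lemma lintegral_Ioc_split (f : ℝ → ENNReal) {a b c : ℝ} (h1 : a ≤ b) (h2 : b ≤ c) :
    ∫⁻ x in Ioc a c, f x = (∫⁻ x in Ioc a b, f x) + ∫⁻ x in Ioc b c, f x := by
  rw [← lintegral_union measurableSet_Ioc (Set.Ioc_disjoint_Ioc_of_le le_rfl),
    Set.Ioc_union_Ioc_eq_Ioc h1 h2]

lemma lintegral_Ioc_eq_Ioo (f : ℝ → ENNReal) (a b : ℝ) :
    ∫⁻ x in Ioc a b, f x = ∫⁻ x in Ioo a b, f x := by
  rw [← MeasureTheory.restrict_Ioo_eq_restrict_Ioc]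

lemma key_trans (a h s : ℝ) :
    ∫⁻ x in Ioo a (a + h), ENNReal.ofReal ((x - a) ^ s) =
      ∫⁻ t in Ioo 0 h, ENNReal.ofReal (t ^ s) := by
  have hmp : MeasurePreserving (fun x : ℝ => x + a) volume volume :=
    measurePreserving_add_right volume a
  have hemb : MeasurableEmbedding (fun x : ℝ => x + a) :=
    (Homeomorph.addRight a).measurableEmbedding
  have := hmp.setLIntegral_comp_preimage_emb hemb
    (fun y => ENNReal.ofReal ((y - a) ^ s)) (Ioo a (a + h))
  have hpre : (fun x : ℝ => x + a) ⁻¹' Ioo a (a + h) = Ioo 0 h := by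
    ext x; simp only [mem_preimage, mem_Ioo]; constructor <;> intro hx <;>
      exact ⟨by linarith [hx.1], by linarith [hx.2]⟩
  rw [hpre] at this
  rw [← this]
  apply lintegral_congr
  intro x
  simp

lemma key_refl (c h s : ℝ) :
    ∫⁻ x in Ioo (c - h) c, ENNReal.ofReal ((c - x) ^ s) =
      ∫⁻ t in Ioo 0 h, ENNReal.ofReal (t ^ s) := by
  have hmp : MeasurePreserving (fun x : ℝ => c + -x) volume volume :=
    (measurePreserving_add_left volume c).comp (Measure.measurePreserving_neg volume)
  have hemb : MeasurableEmbedding (fun x : ℝ => c + -x) :=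
    ((Homeomorph.neg ℝ).trans (Homeomorph.addLeft c)).measurableEmbedding
  have := hmp.setLIntegral_comp_preimage_emb hemb
    (fun y => ENNReal.ofReal ((c - y) ^ s)) (Ioo (c - h) c)
  have hpre : (fun x : ℝ => c + -x) ⁻¹' Ioo (c - h) c = Ioo 0 h := by
    ext x; simp only [mem_preimage, mem_Ioo]; constructor <;> intro hx <;>
      exact ⟨by linarith [hx.1, hx.2], by linarith [hx.1, hx.2]⟩
  rw [hpre] at this
  rw [← this]
  apply lintegral_congr
  intro x
  congr 1
  ring_nf

lemma K_eval {h : ℝ} (hh : 0 < h) {s : ℝ} (hs : -1 < s) :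
    ∫⁻ t in Ioo 0 h, ENNReal.ofReal (t ^ s) =
      ENNReal.ofReal (h ^ (s + 1) / (s + 1)) := by
  have hint : IntegrableOn (fun t : ℝ => t ^ s) (Ioo 0 h) :=
    (intervalIntegral.integrableOn_Ioo_rpow_iff hh).2 hs
  have hnn : 0 ≤ᵐ[volume.restrict (Ioo 0 h)] fun t : ℝ => t ^ s := by
    refine (ae_restrict_iff' measurableSet_Ioo).2 (Filter.Eventually.of_forall ?_)
    intro t ht
    exact Real.rpow_nonneg (le_of_lt ht.1) s
  rw [← ofReal_integral_eq_lintegral_ofReal hint hnn]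
  congr 1
  rw [← integral_Ioc_eq_integral_Ioo, ← intervalIntegral.integral_of_le (le_of_lt hh),
    integral_rpow (Or.inl hs), Real.zero_rpow (by linarith)]
  ring

lemma K_top {h : ℝ} (hh : 0 < h) {s : ℝ} (hs : s ≤ -1) :
    ∫⁻ t in Ioo 0 h, ENNReal.ofReal (t ^ s) = ⊤ := by
  by_contra hne
  have hlt : ∫⁻ t in Ioo 0 h, ENNReal.ofReal (t ^ s) < ⊤ := lt_top_iff_ne_top.2 hne
  have hint : IntegrableOn (fun t : ℝ => t ^ s) (Ioo 0 h) := by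
    refine ⟨(measurable_id.pow_const s).aestronglyMeasurable, ?_⟩
    rw [hasFiniteIntegral_iff_norm]
    have heq : ∫⁻ t in Ioo 0 h, ENNReal.ofReal ‖(t : ℝ) ^ s‖ =
        ∫⁻ t in Ioo 0 h, ENNReal.ofReal (t ^ s) := by
      refine setLIntegral_congr_fun measurableSet_Ioo ?_
      intro t ht
      dsimp only
      rw [Real.norm_eq_abs, abs_of_nonneg (Real.rpow_nonneg (le_of_lt ht.1) s)]
    rw [heq]
    exact hlt
  exact absurd ((intervalIntegral.integrableOn_Ioo_rpow_iff hh).1 hint) (by linarith)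


section Main
variable {σ θ ρ : ℝ}

/-- the integrand of the `ρ`-th power lintegral -/
noncomputable def FF (σ θ ρ : ℝ) (x : ℝ) : ENNReal :=
  (‖deriv (wFn σ θ) x‖₊ : ℝ≥0∞) ^ ρ

lemma FF_eq_of_deriv_nonneg {x y : ℝ} (hy : 0 ≤ y) (hd : deriv (wFn σ θ) x = y)
    (hρ : 0 ≤ ρ) : FF σ θ ρ x = ENNReal.ofReal (y ^ ρ) := by
  rw [FF, hd, ← enorm_eq_nnnorm, Real.enorm_eq_ofReal hy, ENNReal.ofReal_rpow_of_nonneg hy hρ]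

lemma piece_integral (hσ0 : 0 < σ) (hρ : 0 < ρ) {n : ℕ} (hn : 2 ≤ n) :
    ∫⁻ x in Ioc (aSeq θ n) (aSeq θ (n + 1)), FF σ θ ρ x =
      2 * (ENNReal.ofReal (σ ^ ρ) *
        ∫⁻ t in Ioo 0 ((n : ℝ) ^ (-θ)), ENNReal.ofReal (t ^ ((σ - 1) * ρ))) := by
  have hn1 : 1 ≤ n := by omega
  have hh : 0 < (n : ℝ) ^ (-θ) := hpos θ hn1
  set a := aSeq θ n with ha
  set h := (n : ℝ) ^ (-θ) with hhdef
  have hb : aSeq θ (n + 1) = a + 4 * h := aSeq_succ θ hn1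
  have hsub : ∀ x : ℝ, x ∈ Ioo a (a + 4 * h) → deriv (wFn σ θ) x = deriv (wPiece σ θ n) x := by
    intro x hx
    exact deriv_wFn_piece σ θ hn (by rw [hb]; exact hx)
  rw [hb]
  rw [lintegral_Ioc_split _ (by linarith : a ≤ a + h) (by linarith : a + h ≤ a + 4 * h),
    lintegral_Ioc_split _ (by linarith : a + h ≤ a + 2 * h)
      (by linarith : a + 2 * h ≤ a + 4 * h),
    lintegral_Ioc_split _ (by linarith : a + 2 * h ≤ a + 3 * h)
      (by linarith : a + 3 * h ≤ a + 4 * h)]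
  have hI2 : ∫⁻ x in Ioc (a + h) (a + 2 * h), FF σ θ ρ x = 0 := by
    rw [lintegral_Ioc_eq_Ioo]
    rw [setLIntegral_congr_fun measurableSet_Ioo (id
      (fun x hx => FF_eq_of_deriv_nonneg le_rfl
        (by rw [hsub x ⟨by linarith [hx.1], by linarith [hx.2]⟩]
            exact deriv_piece_2 σ θ n hx) hρ.le))]
    simp [Real.zero_rpow (ne_of_gt hρ)]
  have hI4 : ∫⁻ x in Ioc (a + 3 * h) (a + 4 * h), FF σ θ ρ x = 0 := by
    rw [lintegral_Ioc_eq_Ioo]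
    rw [setLIntegral_congr_fun measurableSet_Ioo (id
      (fun x hx => FF_eq_of_deriv_nonneg le_rfl
        (by rw [hsub x ⟨by linarith [hx.1], hx.2⟩]
            exact deriv_piece_4 σ θ n hn1 hx) hρ.le))]
    simp [Real.zero_rpow (ne_of_gt hρ)]
  have hI1 : ∫⁻ x in Ioc a (a + h), FF σ θ ρ x =
      ENNReal.ofReal (σ ^ ρ) * ∫⁻ t in Ioo 0 h, ENNReal.ofReal (t ^ ((σ - 1) * ρ)) := by
    rw [lintegral_Ioc_eq_Ioo]
    have hcong : ∀ x ∈ Ioo a (a + h), FF σ θ ρ x =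
        ENNReal.ofReal (σ ^ ρ) * ENNReal.ofReal ((x - a) ^ ((σ - 1) * ρ)) := by
      intro x hx
      have hxa : 0 < x - a := sub_pos.2 hx.1
      have hd : deriv (wFn σ θ) x = σ * (x - a) ^ (σ - 1) := by
        rw [hsub x ⟨hx.1, by linarith [hx.2]⟩]
        exact deriv_piece_1 σ θ n hσ0 hx
      rw [FF_eq_of_deriv_nonneg (by positivity) hd hρ.le,
        Real.mul_rpow hσ0.le (Real.rpow_nonneg hxa.le _), ← Real.rpow_mul hxa.le,
        ENNReal.ofReal_mul (by positivity)]
    rw [setLIntegral_congr_fun measurableSet_Ioo hcong,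
      lintegral_const_mul' _ _ ENNReal.ofReal_ne_top, key_trans]
  have hI3 : ∫⁻ x in Ioc (a + 2 * h) (a + 3 * h), FF σ θ ρ x =
      ENNReal.ofReal (σ ^ ρ) * ∫⁻ t in Ioo 0 h, ENNReal.ofReal (t ^ ((σ - 1) * ρ)) := by
    rw [lintegral_Ioc_eq_Ioo]
    have hcong : ∀ x ∈ Ioo (a + 2 * h) (a + 3 * h), FF σ θ ρ x =
        ENNReal.ofReal (σ ^ ρ) * ENNReal.ofReal ((a + 3 * h - x) ^ ((σ - 1) * ρ)) := by
      intro x hx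
      have hxa : 0 < a + 3 * h - x := sub_pos.2 hx.2
      have hd : deriv (wFn σ θ) x = -(σ * (a + 3 * h - x) ^ (σ - 1)) := by
        rw [hsub x ⟨by linarith [hx.1], by linarith [hx.2]⟩]
        exact deriv_piece_3 σ θ n hσ0 hn1 hx
      have hnn : 0 ≤ σ * (a + 3 * h - x) ^ (σ - 1) := by positivity
      rw [FF, hd, nnnorm_neg, ← enorm_eq_nnnorm, Real.enorm_eq_ofReal hnn,
        ENNReal.ofReal_rpow_of_nonneg hnn hρ.le,
        Real.mul_rpow hσ0.le (Real.rpow_nonneg hxa.le _), ← Real.rpow_mul hxa.le,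
        ENNReal.ofReal_mul (by positivity)]
    rw [setLIntegral_congr_fun measurableSet_Ioo hcong,
      lintegral_const_mul' _ _ ENNReal.ofReal_ne_top]
    congr 1
    rw [show a + 2 * h = (a + 3 * h) - h by ring]
    exact key_refl (a + 3 * h) h ((σ - 1) * ρ)
  rw [hI1, hI2, hI3, hI4, zero_add, add_zero, two_mul]

lemma total_integral (hσ0 : 0 < σ) (hθ : 1 < θ) (hρ : 0 < ρ) :
    ∫⁻ x, FF σ θ ρ x =
      2 * (ENNReal.ofReal (σ ^ ρ) *
        ∑' k : ℕ, ∫⁻ t in Ioo 0 (((k + 2 : ℕ) : ℝ) ^ (-θ)),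
          ENNReal.ofReal (t ^ ((σ - 1) * ρ))) := by
  classical
  set T : ℕ → Set ℝ := fun i =>
    match i with
    | 0 => Iio (aSeq θ 2)
    | 1 => Ioi (4 * zetaR θ)
    | (k + 2) => Ioc (aSeq θ (k + 2)) (aSeq θ (k + 3)) with hT
  have hTm : ∀ i, MeasurableSet (T i) := by
    intro i
    match i with
    | 0 => exact measurableSet_Iio
    | 1 => exact measurableSet_Ioi
    | (k + 2) => exact measurableSet_Ioc
  have hkey : ∀ i j, i < j → Disjoint (T i) (T j) := by
    intro i j hij
    match i, j with
    | 0, 1 =>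
      refine Set.disjoint_left.2 fun x hx hx' => ?_
      have h1 : x < aSeq θ 2 := hx
      have h2 : 4 * zetaR θ < x := hx'
      have := aSeq_le_zeta hθ 2
      linarith
    | 0, (l + 2) =>
      refine Set.disjoint_left.2 fun x hx hx' => ?_
      have h1 : x < aSeq θ 2 := hx
      have h2 : aSeq θ (l + 2) < x := hx'.1
      have := aSeq_mono θ (by omega) (by omega : 2 ≤ l + 2)
      linarith
    | 1, (l + 2) =>
      refine Set.disjoint_left.2 fun x hx hx' => ?_
      have h1 : 4 * zetaR θ < x := hx
      have h2 : x ≤ aSeq θ (l + 3) := hx'.2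
      have := aSeq_le_zeta hθ (l + 3)
      linarith
    | (k + 2), (l + 2) =>
      refine Set.disjoint_left.2 fun x hx hx' => ?_
      have h1 : x ≤ aSeq θ (k + 3) := hx.2
      have h2 : aSeq θ (l + 2) < x := hx'.1
      have := aSeq_mono θ (by omega) (by omega : k + 3 ≤ l + 2)
      linarith
  have hTd : Pairwise (Function.onFun Disjoint T) := by
    intro i j hne
    rcases hne.lt_or_gt with h | h
    · exact hkey i j h
    · exact (hkey j i h).symm
  have hcompl : (⋃ i, T i)ᶜ ⊆ Set.range (aSeq θ) ∪ {4 * zetaR θ} := by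
    intro x hx
    simp only [mem_compl_iff, mem_iUnion, not_exists] at hx
    have h0 : aSeq θ 2 ≤ x := not_lt.1 (hx 0)
    have h1 : x ≤ 4 * zetaR θ := not_lt.1 (hx 1)
    rcases eq_or_lt_of_le h1 with heq | hlt
    · exact Or.inr (by simp [heq])
    · obtain ⟨n, hn, hna, hnb⟩ := exists_piece hθ h0 hlt
      rcases eq_or_lt_of_le hna with heq | hlt'
      · exact Or.inl ⟨n, heq⟩
      · exfalso
        obtain ⟨k, rfl⟩ : ∃ k, n = k + 2 := ⟨n - 2, by omega⟩
        exact hx (k + 2) ⟨hlt', le_of_lt hnb⟩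
  have hnull : volume ((⋃ i, T i)ᶜ) = 0 :=
    measure_mono_null hcompl
      (((Set.countable_range (aSeq θ)).union (Set.countable_singleton _)).measure_zero _)
  have hstep1 : ∫⁻ x, FF σ θ ρ x = ∫⁻ x in ⋃ i, T i, FF σ θ ρ x := by
    rw [← lintegral_add_compl (FF σ θ ρ) (MeasurableSet.iUnion hTm),
      setLIntegral_measure_zero _ _ hnull, add_zero]
  have hstep2 : ∫⁻ x in ⋃ i, T i, FF σ θ ρ x = ∑' i, ∫⁻ x in T i, FF σ θ ρ x :=
    lintegral_iUnion hTm hTd _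
  have hT0 : ∫⁻ x in T 0, FF σ θ ρ x = 0 := by
    rw [show T 0 = Iio (aSeq θ 2) from rfl,
      setLIntegral_congr_fun measurableSet_Iio (id
        (fun x hx => FF_eq_of_deriv_nonneg le_rfl (deriv_wFn_left σ θ hx) hρ.le))]
    simp [Real.zero_rpow (ne_of_gt hρ)]
  have hT1 : ∫⁻ x in T 1, FF σ θ ρ x = 0 := by
    rw [show T 1 = Ioi (4 * zetaR θ) from rfl,
      setLIntegral_congr_fun measurableSet_Ioi (id
        (fun x hx => FF_eq_of_deriv_nonneg le_rfl (deriv_wFn_right hθ hx) hρ.le))]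
    simp [Real.zero_rpow (ne_of_gt hρ)]
  rw [hstep1, hstep2, tsum_eq_zero_add' ENNReal.summable, hT0, zero_add,
    tsum_eq_zero_add' ENNReal.summable, hT1, zero_add]
  have hterm : ∀ k : ℕ, ∫⁻ x in T (k + 2), FF σ θ ρ x =
      2 * (ENNReal.ofReal (σ ^ ρ) *
        ∫⁻ t in Ioo 0 (((k + 2 : ℕ) : ℝ) ^ (-θ)), ENNReal.ofReal (t ^ ((σ - 1) * ρ))) := by
    intro k
    exact piece_integral hσ0 hρ (by omega)
  calc ∑' k : ℕ, ∫⁻ x in T (k + 1 + 1), FF σ θ ρ x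
      = ∑' k : ℕ, 2 * (ENNReal.ofReal (σ ^ ρ) *
          ∫⁻ t in Ioo 0 (((k + 2 : ℕ) : ℝ) ^ (-θ)),
            ENNReal.ofReal (t ^ ((σ - 1) * ρ))) := by
        exact tsum_congr hterm
    _ = 2 * (ENNReal.ofReal (σ ^ ρ) *
          ∑' k : ℕ, ∫⁻ t in Ioo 0 (((k + 2 : ℕ) : ℝ) ^ (-θ)),
            ENNReal.ofReal (t ^ ((σ - 1) * ρ))) := by
        rw [ENNReal.tsum_mul_left, ENNReal.tsum_mul_left]

end Main


lemma arith {σ θ ρ : ℝ} (hσ1 : σ < 1) (hθ : 1 < θ) (hρ : 0 < ρ) :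
    ((1 - σ) / (1 - 1 / θ) < 1 / ρ) ↔ 1 < θ * ((σ - 1) * ρ + 1) := by
  have hθ0 : 0 < θ := by linarith
  have hinv : θ * (1 / θ) = 1 := by field_simp
  have h1 : 0 < 1 - 1 / θ := by
    rw [sub_pos, div_lt_one hθ0]; exact hθ
  rw [div_lt_div_iff₀ h1 hρ]
  constructor
  · intro hA
    nlinarith [mul_lt_mul_of_pos_left hA hθ0]
  · intro hB
    have h2 : θ * ((1 - σ) * ρ) < θ * (1 - 1 / θ) := by nlinarith
    have := (mul_lt_mul_iff_right₀ hθ0).1 h2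
    linarith


end Aux

open Aux in
/-- For 0 < σ < 1, 1 < θ, 0 < ρ < ∞: w'_{σ,θ} ∈ L_ρ(ℝ) iff (1−σ)/(1−1/θ) < 1/ρ. -/
theorem stmt5 (σ θ ρ : ℝ) (hσ0 : 0 < σ) (hσ1 : σ < 1) (hθ : 1 < θ) (hρ : 0 < ρ) :
    MeasureTheory.MemLp (deriv (wFn σ θ)) (ENNReal.ofReal ρ) volume ↔
      (1 - σ) / (1 - 1 / θ) < 1 / ρ := by
  have hmeas : AEStronglyMeasurable (deriv (wFn σ θ)) volume :=
    (stronglyMeasurable_deriv (wFn σ θ)).aestronglyMeasurable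
  have hp0 : (ENNReal.ofReal ρ) ≠ 0 := ne_of_gt (ENNReal.ofReal_pos.2 hρ)
  have hpt : (ENNReal.ofReal ρ) ≠ ⊤ := ENNReal.ofReal_ne_top
  -- step 1 : Memℒp ↔ lintegral < ⊤
  have hmem : MeasureTheory.MemLp (deriv (wFn σ θ)) (ENNReal.ofReal ρ) volume ↔
      (∫⁻ x, FF σ θ ρ x) < ⊤ := by
    have he : eLpNorm (deriv (wFn σ θ)) (ENNReal.ofReal ρ) volume =
        (∫⁻ x, FF σ θ ρ x) ^ (1 / ρ) := by
      rw [eLpNorm_eq_lintegral_rpow_enorm_toReal hp0 hpt, ENNReal.toReal_ofReal hρ.le]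
      rfl
    constructor
    · intro hm
      have hlt := hm.2
      rw [he, ENNReal.rpow_lt_top_iff_of_pos (by positivity : (0:ℝ) < 1 / ρ)] at hlt
      exact hlt
    · intro hlt
      exact ⟨hmeas, by
        rw [he, ENNReal.rpow_lt_top_iff_of_pos (by positivity : (0:ℝ) < 1 / ρ)]
        exact hlt⟩
  rw [hmem, total_integral hσ0 hθ hρ]
  -- step 2 : strip the constants
  have hC0 : ENNReal.ofReal (σ ^ ρ) ≠ 0 := by
    simp only [ne_eq, ENNReal.ofReal_eq_zero, not_le]
    positivity
  have hCt : ENNReal.ofReal (σ ^ ρ) ≠ ⊤ := ENNReal.ofReal_ne_top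
  have hmul : ∀ X : ℝ≥0∞, (2 * (ENNReal.ofReal (σ ^ ρ) * X) < ⊤) ↔ X < ⊤ := by
    intro X
    constructor
    · intro hlt
      by_contra hX
      rw [not_lt, top_le_iff] at hX
      rw [hX, ENNReal.mul_top hC0, ENNReal.mul_top (by norm_num)] at hlt
      exact absurd hlt (by simp)
    · intro hX
      exact ENNReal.mul_lt_top (by norm_num) (ENNReal.mul_lt_top hCt.lt_top hX)
  rw [hmul]
  rw [arith hσ1 hθ hρ]
  -- step 3 : evaluate the sum
  rcases le_or_gt ((σ - 1) * ρ) (-1) with hs | hs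
  · -- divergent case : both sides false
    have hK : (∫⁻ t in Ioo 0 (((0 + 2 : ℕ) : ℝ) ^ (-θ)),
        ENNReal.ofReal (t ^ ((σ - 1) * ρ))) = ⊤ :=
      K_top (hpos θ (by omega)) hs
    have hsum : (∑' k : ℕ, ∫⁻ t in Ioo 0 (((k + 2 : ℕ) : ℝ) ^ (-θ)),
        ENNReal.ofReal (t ^ ((σ - 1) * ρ))) = ⊤ :=
      top_le_iff.1 (hK ▸ ENNReal.le_tsum 0)
    rw [hsum]
    apply iff_of_false (by simp)
    intro hcon
    nlinarith
  · -- convergent case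
    have hkk : ∀ k : ℕ, (∫⁻ t in Ioo 0 (((k + 2 : ℕ) : ℝ) ^ (-θ)),
        ENNReal.ofReal (t ^ ((σ - 1) * ρ))) =
        ENNReal.ofReal ((1 / ((σ - 1) * ρ + 1)) *
          ((k + 2 : ℕ) : ℝ) ^ (-(θ * ((σ - 1) * ρ + 1)))) := by
      intro k
      rw [K_eval (hpos θ (by omega)) hs]
      congr 1
      have hk0 : (0:ℝ) ≤ ((k + 2 : ℕ) : ℝ) := by positivity
      rw [← Real.rpow_mul hk0,
        show -θ * ((σ - 1) * ρ + 1) = -(θ * ((σ - 1) * ρ + 1)) by ring]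
      ring
    have hs1 : 0 < (σ - 1) * ρ + 1 := by linarith
    set X : ℝ := θ * ((σ - 1) * ρ + 1) with hX
    set p : ℝ := -X with hp
    set g : ℕ → ℝ := fun k => (1 / ((σ - 1) * ρ + 1)) * ((k + 2 : ℕ) : ℝ) ^ p with hg
    have hgnn : ∀ k, 0 ≤ g k := by
      intro k
      have : (0:ℝ) < ((k + 2 : ℕ) : ℝ) := by positivity
      have := Real.rpow_nonneg this.le p
      positivity
    have hrw : (∑' k : ℕ, ∫⁻ t in Ioo 0 (((k + 2 : ℕ) : ℝ) ^ (-θ)),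
        ENNReal.ofReal (t ^ ((σ - 1) * ρ))) = ∑' k : ℕ, ENNReal.ofReal (g k) :=
      tsum_congr hkk
    rw [hrw, lt_top_iff_ne_top]
    have h1 : (∑' k : ℕ, ENNReal.ofReal (g k)) ≠ ⊤ ↔ Summable g := by
      rw [show (fun k : ℕ => ENNReal.ofReal (g k)) =
        fun k : ℕ => (((g k).toNNReal : ℝ≥0) : ℝ≥0∞) from rfl,
        ENNReal.tsum_coe_ne_top_iff_summable, ← NNReal.summable_coe,
        show (fun k : ℕ => (((g k).toNNReal : ℝ≥0) : ℝ)) = g from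
          funext fun k => Real.coe_toNNReal _ (hgnn k)]
    rw [h1, hg, summable_mul_left_iff (by positivity : (1:ℝ) / ((σ - 1) * ρ + 1) ≠ 0)]
    have h2 : Summable (fun k : ℕ => ((k + 2 : ℕ) : ℝ) ^ p) ↔
        Summable (fun n : ℕ => (n : ℝ) ^ p) :=
      summable_nat_add_iff (f := fun n : ℕ => (n : ℝ) ^ p) 2
    rw [h2, Real.summable_nat_rpow, hp, neg_lt_neg_iff]
end

section
/- If σ ≥ 1 then w'_{σ,θ} ∈ L_ρ(ℝ) for all 0 < ρ ≤ ∞; in particular ‖w'_{σ,θ}‖_{L_∞} < ∞ if and only if σ ≥ 1. -/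
open MeasureTheory Real Set

lemma aSeq_mono (θ : ℝ) : Monotone (aSeq θ) := by
  intro m n hmn
  unfold aSeq
  have h := Finset.sum_le_sum_of_subset_of_nonneg
    (Finset.Icc_subset_Icc_right (by omega : m - 1 ≤ n - 1))
    (fun j _ _ => by positivity : ∀ j ∈ Finset.Icc 1 (n-1), j ∉ Finset.Icc 1 (m-1) → (0:ℝ) ≤ (j:ℝ) ^ (-θ))
  linarith

lemma aSeq_succ (θ : ℝ) {n : ℕ} (hn : 1 ≤ n) :
    aSeq θ (n + 1) = aSeq θ n + 4 * (n : ℝ) ^ (-θ) := by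
  obtain ⟨m, rfl⟩ := Nat.exists_eq_add_of_le hn
  unfold aSeq
  rw [show 1 + m + 1 - 1 = (m) + 1 by omega, show 1 + m - 1 = m by omega,
    Finset.sum_Icc_succ_top (by omega : 1 ≤ m + 1)]
  push_cast; ring

lemma aSeq_two (θ : ℝ) : aSeq θ 2 = 4 := by
  unfold aSeq
  norm_num

lemma npow_pos {θ : ℝ} {n : ℕ} (hn : 1 ≤ n) : 0 < (n : ℝ) ^ (-θ) :=
  Real.rpow_pos_of_pos (by exact_mod_cast hn) _

lemma npow_le_one {θ : ℝ} (hθ : 0 < θ) {n : ℕ} (hn : 1 ≤ n) : (n : ℝ) ^ (-θ) ≤ 1 :=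
  Real.rpow_le_one_of_one_le_of_nonpos (by exact_mod_cast hn) (by linarith)

lemma wFn_eq_piece (σ θ : ℝ) {n : ℕ} (hn : 2 ≤ n) {ξ : ℝ}
    (h1 : aSeq θ n ≤ ξ) (h2 : ξ < aSeq θ (n + 1)) :
    wFn σ θ ξ = wPiece σ θ n ξ := by
  have hex : ∃ m : ℕ, 2 ≤ m ∧ aSeq θ m ≤ ξ ∧ ξ < aSeq θ (m + 1) := ⟨n, hn, h1, h2⟩
  rw [wFn, dif_pos hex]
  obtain ⟨hm2, hm1, hm2'⟩ := hex.choose_spec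
  congr 1
  set m := hex.choose
  by_contra hne
  rcases lt_or_gt_of_ne hne with h | h
  · linarith [aSeq_mono θ (by omega : m + 1 ≤ n)]
  · linarith [aSeq_mono θ (by omega : n + 1 ≤ m)]

noncomputable def gB (θ : ℝ) (n : ℕ) (ξ : ℝ) : ℝ :=
  max 0 (min (min (ξ - aSeq θ (n + 2)) (((n : ℝ) + 2) ^ (-θ)))
    (aSeq θ (n + 2) + 3 * ((n : ℝ) + 2) ^ (-θ) - ξ))

noncomputable def GFn (θ : ℝ) (ξ : ℝ) : ℝ := ⨆ n : ℕ, gB θ n ξ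

lemma gB_nonneg (θ : ℝ) (n : ℕ) (ξ : ℝ) : 0 ≤ gB θ n ξ := le_max_left _ _

lemma gB_le_one {θ : ℝ} (hθ : 0 < θ) (n : ℕ) (ξ : ℝ) : gB θ n ξ ≤ 1 := by
  have h : ((n : ℝ) + 2) ^ (-θ) ≤ 1 :=
    Real.rpow_le_one_of_one_le_of_nonpos (by have := Nat.cast_nonneg (α := ℝ) n; linarith) (by linarith)
  refine max_le (by norm_num) ?_
  exact le_trans (min_le_left _ _) (le_trans (min_le_right _ _) h)

lemma gB_lipschitz (θ : ℝ) (n : ℕ) : LipschitzWith 1 (gB θ n) := by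
  have h1 : LipschitzWith 1 (fun ξ : ℝ => ξ - aSeq θ (n + 2)) :=
    LipschitzWith.of_dist_le_mul fun x y => by rw [dist_sub_right]; simp
  have h2 : LipschitzWith 1 (fun _ : ℝ => ((n : ℝ) + 2) ^ (-θ)) :=
    (LipschitzWith.const _).weaken (by norm_num)
  have h3 : LipschitzWith 1 (fun ξ : ℝ => aSeq θ (n + 2) + 3 * ((n : ℝ) + 2) ^ (-θ) - ξ) :=
    LipschitzWith.of_dist_le_mul fun x y => by rw [dist_sub_left]; simp
  have h0 : LipschitzWith 1 (fun _ : ℝ => (0 : ℝ)) :=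
    (LipschitzWith.const _).weaken (by norm_num)
  rw [show (1:NNReal) = max 1 (max (max 1 1) 1) by simp]
  exact (h0.max (((h1.min h2).min h3)))

lemma gB_bddAbove {θ : ℝ} (hθ : 0 < θ) (ξ : ℝ) : BddAbove (Set.range fun n => gB θ n ξ) :=
  ⟨1, by rintro x ⟨n, rfl⟩; exact gB_le_one hθ n ξ⟩

lemma gB_le_GFn {θ : ℝ} (hθ : 0 < θ) (n : ℕ) (ξ : ℝ) : gB θ n ξ ≤ GFn θ ξ :=
  le_ciSup (gB_bddAbove hθ ξ) n

lemma GFn_nonneg {θ : ℝ} (hθ : 0 < θ) (ξ : ℝ) : 0 ≤ GFn θ ξ :=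
  le_trans (gB_nonneg θ 0 ξ) (gB_le_GFn hθ 0 ξ)

lemma GFn_le_one {θ : ℝ} (hθ : 0 < θ) (ξ : ℝ) : GFn θ ξ ≤ 1 :=
  ciSup_le fun n => gB_le_one hθ n ξ

lemma GFn_lipschitz {θ : ℝ} (hθ : 0 < θ) : LipschitzWith 1 (GFn θ) := by
  have key : ∀ x y : ℝ, GFn θ x ≤ GFn θ y + dist x y := by
    intro x y
    refine ciSup_le fun n => ?_
    have h := (gB_lipschitz θ n).dist_le_mul x y
    push_cast at h
    rw [one_mul] at h
    simp only [Real.dist_eq] at h ⊢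
    have h2 := gB_le_GFn hθ n y
    have h3 := abs_sub_abs_le_abs_sub (gB θ n x) (gB θ n y)
    cases' abs_sub_le_iff.mp h with ha hb
    linarith
  refine LipschitzWith.of_dist_le_mul fun x y => ?_
  push_cast
  rw [one_mul]
  simp only [Real.dist_eq, abs_sub_le_iff]
  constructor
  · have := key x y; simp only [Real.dist_eq] at this; linarith
  · have := key y x; simp only [Real.dist_eq] at this; rw [abs_sub_comm] at this; linarith

lemma cast_shift (n : ℕ) : ((n : ℝ) + 2) = ((n + 2 : ℕ) : ℝ) := by push_cast; ring

lemma gB_eq_zero {θ : ℝ} {m : ℕ} {ξ : ℝ}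
    (h : ξ < aSeq θ (m + 2) ∨ aSeq θ (m + 2) + 3 * ((m : ℝ) + 2) ^ (-θ) ≤ ξ) :
    gB θ m ξ = 0 := by
  rcases h with h | h
  · exact max_eq_left (le_trans (min_le_left _ _) (le_trans (min_le_left _ _) (by linarith)))
  · exact max_eq_left (le_trans (min_le_right _ _) (by linarith))

lemma GFn_eq_block {θ : ℝ} (hθ : 0 < θ) {n : ℕ} (hn : 2 ≤ n) {ξ : ℝ}
    (h1 : aSeq θ n ≤ ξ) (h2 : ξ < aSeq θ (n + 1)) :
    GFn θ ξ = max 0 (min (min (ξ - aSeq θ n) ((n : ℝ) ^ (-θ)))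
      (aSeq θ n + 3 * (n : ℝ) ^ (-θ) - ξ)) := by
  obtain ⟨k, rfl⟩ : ∃ k, n = k + 2 := ⟨n - 2, by omega⟩
  have hgk : gB θ k ξ = max 0 (min (min (ξ - aSeq θ (k + 2)) (((k + 2 : ℕ) : ℝ) ^ (-θ)))
      (aSeq θ (k + 2) + 3 * ((k + 2 : ℕ) : ℝ) ^ (-θ) - ξ)) := by
    rw [gB, cast_shift]
  refine le_antisymm (ciSup_le fun m => ?_) (hgk ▸ le_ciSup (gB_bddAbove hθ ξ) k)
  rcases eq_or_ne m k with rfl | hne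
  · exact le_of_eq hgk
  rw [gB_eq_zero ?_]
  · exact le_max_left _ _
  rcases lt_or_gt_of_ne hne with hlt | hgt
  · -- m < k : m + 2 < 2 + k, so a_{m+3} ≤ a_{2+k} ≤ ξ
    right
    have h3 : aSeq θ (m + 2 + 1) ≤ aSeq θ (k + 2) := aSeq_mono θ (by omega)
    rw [aSeq_succ θ (by omega : 1 ≤ m + 2)] at h3
    have hp : 0 < ((m + 2 : ℕ) : ℝ) ^ (-θ) := npow_pos (by omega)
    rw [← cast_shift] at h3 hp
    linarith
  · -- m > k : 2 + k + 1 ≤ m + 2, ξ < a_{2+k+1} ≤ a_{m+2}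
    left
    have h3 : aSeq θ (k + 2 + 1) ≤ aSeq θ (m + 2) := aSeq_mono θ (by omega)
    linarith

lemma wFn_eq_rpow_GFn {σ θ : ℝ} (hσ : 0 < σ) (hθ : 0 < θ) (ξ : ℝ) :
    wFn σ θ ξ = (GFn θ ξ) ^ σ := by
  by_cases hex : ∃ n : ℕ, 2 ≤ n ∧ aSeq θ n ≤ ξ ∧ ξ < aSeq θ (n + 1)
  · obtain ⟨n, hn, h1, h2⟩ := hex
    rw [wFn_eq_piece σ θ hn h1 h2, GFn_eq_block hθ hn h1 h2]
    set a := aSeq θ n with ha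
    set p := (n : ℝ) ^ (-θ) with hp
    have hp0 : 0 < p := npow_pos (by omega)
    have h2' : ξ < a + 4 * p := by rw [aSeq_succ θ (by omega : 1 ≤ n)] at h2; linarith
    rw [wPiece]
    by_cases c1 : ξ < a + p
    · rw [if_pos c1]
      have : max 0 (min (min (ξ - a) p) (a + 3 * p - ξ)) = ξ - a := by
        rw [min_eq_left (by linarith : ξ - a ≤ p), min_eq_left (by linarith),
          max_eq_right (by linarith)]
      rw [this]
    · rw [if_neg c1]
      push_neg at c1
      by_cases c2 : ξ < a + 2 * p
      · rw [if_pos c2]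
        have : max 0 (min (min (ξ - a) p) (a + 3 * p - ξ)) = p := by
          rw [min_eq_right (by linarith : p ≤ ξ - a), min_eq_left (by linarith),
            max_eq_right (by linarith)]
        rw [this, hp, ← Real.rpow_mul (Nat.cast_nonneg n)]
        congr 1
        ring
      · rw [if_neg c2]
        push_neg at c2
        by_cases c3 : ξ < a + 3 * p
        · rw [if_pos c3]
          have : max 0 (min (min (ξ - a) p) (a + 3 * p - ξ)) = a + 3 * p - ξ := by
            rw [min_eq_right (by linarith : p ≤ ξ - a), min_eq_right (by linarith),
              max_eq_right (by linarith)]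
          rw [this]
        · rw [if_neg c3]
          push_neg at c3
          have : max 0 (min (min (ξ - a) p) (a + 3 * p - ξ)) = 0 :=
            max_eq_left (le_trans (min_le_right _ _) (by linarith))
          rw [this, Real.zero_rpow (ne_of_gt hσ)]
  · rw [wFn, dif_neg hex]
    push_neg at hex
    replace hex : ∀ m : ℕ, 2 ≤ m → aSeq θ m ≤ ξ → aSeq θ (m + 1) ≤ ξ := by
      intro m hm hle; exact (hex m hm hle)
    have hz : ∀ m : ℕ, gB θ m ξ = 0 := by
      intro m
      refine gB_eq_zero ?_
      rcases lt_or_ge ξ (aSeq θ (m + 2)) with h | h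
      · exact Or.inl h
      · right
        have h4 : aSeq θ (m + 2 + 1) ≤ ξ := hex (m + 2) (by omega) h
        rw [aSeq_succ θ (by omega : 1 ≤ m + 2)] at h4
        have hp : 0 < ((m + 2 : ℕ) : ℝ) ^ (-θ) := npow_pos (by omega)
        rw [← cast_shift] at h4 hp
        linarith
    have : GFn θ ξ = 0 := by
      rw [GFn]; simp [hz]
    rw [this, Real.zero_rpow (ne_of_gt hσ)]

lemma rpow_lipschitzOn {σ : ℝ} (hσ : 1 ≤ σ) :
    LipschitzOnWith (Real.toNNReal σ) (fun t : ℝ => t ^ σ) (Icc 0 1) := by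
  refine (convex_Icc (0:ℝ) 1).lipschitzOnWith_of_nnnorm_hasDerivWithin_le
    (f' := fun t => σ * t ^ (σ - 1)) (fun x _ => ?_) (fun x hx => ?_)
  · exact (Real.hasDerivAt_rpow_const (Or.inr hσ)).hasDerivWithinAt
  · have hb : ‖σ * x ^ (σ - 1)‖ ≤ σ := by
      rw [Real.norm_eq_abs, abs_mul, abs_of_nonneg (by linarith : (0:ℝ) ≤ σ),
        abs_of_nonneg (Real.rpow_nonneg hx.1 _)]
      nlinarith [Real.rpow_le_one hx.1 hx.2 (by linarith : (0:ℝ) ≤ σ - 1)]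
    rw [← NNReal.coe_le_coe, coe_nnnorm, Real.coe_toNNReal _ (by linarith)]
    exact hb

lemma wFn_lipschitz {σ θ : ℝ} (hσ : 1 ≤ σ) (hθ : 0 < θ) :
    LipschitzWith (Real.toNNReal σ) (wFn σ θ) := by
  have hcomp : wFn σ θ = (fun t : ℝ => t ^ σ) ∘ GFn θ := by
    funext ξ; exact wFn_eq_rpow_GFn (by linarith) hθ ξ
  rw [hcomp]
  have h := (rpow_lipschitzOn hσ).comp ((GFn_lipschitz hθ).lipschitzOnWith (s := univ))
    (fun ξ _ => ⟨GFn_nonneg hθ ξ, GFn_le_one hθ ξ⟩)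
  rw [lipschitzOnWith_univ] at h
  simpa using h

noncomputable def ALim (θ : ℝ) : ℝ := 4 * ∑' n : ℕ, ((n : ℝ) + 1) ^ (-θ)

lemma summable_shift {θ : ℝ} (hθ : 1 < θ) : Summable (fun n : ℕ => ((n : ℝ) + 1) ^ (-θ)) := by
  have h : Summable (fun n : ℕ => 1 / (n : ℝ) ^ θ) := (Real.summable_one_div_nat_rpow).2 hθ
  have h2 := h.comp_injective (add_left_injective 1)
  refine h2.congr fun n => ?_
  simp only [Function.comp]
  rw [one_div, ← Real.rpow_neg (by positivity)]
  push_cast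
  ring_nf

lemma aSeq_le_ALim {θ : ℝ} (hθ : 1 < θ) (n : ℕ) : aSeq θ n ≤ ALim θ := by
  rw [aSeq, ALim]
  have h1 : ∑ j ∈ Finset.Icc 1 (n - 1), (j : ℝ) ^ (-θ)
      = ∑ i ∈ Finset.range (n - 1), ((i : ℝ) + 1) ^ (-θ) := by
    rw [show Finset.Icc 1 (n - 1) = Finset.Ico 1 (n - 1 + 1) from by rw [Finset.Ico_add_one_right_eq_Icc],
      Finset.sum_Ico_eq_sum_range, show n - 1 + 1 - 1 = n - 1 from by omega]
    refine Finset.sum_congr rfl fun i _ => ?_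
    push_cast; ring_nf
  rw [h1]
  have := Summable.sum_le_tsum (Finset.range (n - 1)) (fun i _ => by positivity)
    (summable_shift hθ)
  linarith

lemma wFn_zero_left {σ θ ξ : ℝ} (hξ : ξ < 4) : wFn σ θ ξ = 0 := by
  rw [wFn, dif_neg]
  rintro ⟨n, hn, h1, -⟩
  have := aSeq_mono θ hn
  rw [aSeq_two] at this
  linarith

lemma wFn_zero_right {σ θ ξ : ℝ} (hθ : 1 < θ) (hξ : ALim θ < ξ) : wFn σ θ ξ = 0 := by
  rw [wFn, dif_neg]
  rintro ⟨n, -, -, h2⟩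
  have := aSeq_le_ALim hθ (n + 1)
  linarith

lemma deriv_wFn_zero_outside {σ θ ξ : ℝ} (hθ : 1 < θ) (hξ : ξ ∉ Icc (4:ℝ) (ALim θ)) :
    deriv (wFn σ θ) ξ = 0 := by
  rw [mem_Icc, not_and_or] at hξ
  have : wFn σ θ =ᶠ[nhds ξ] fun _ => 0 := by
    rcases hξ with h | h
    · push_neg at h
      filter_upwards [Iio_mem_nhds h] with y hy
      exact wFn_zero_left hy
    · push_neg at h
      filter_upwards [Ioi_mem_nhds h] with y hy
      exact wFn_zero_right hθ hy
  rw [this.deriv_eq, deriv_const]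

lemma deriv_wFn_bound {σ θ : ℝ} (hσ : 1 ≤ σ) (hθ : 1 < θ) (ξ : ℝ) :
    ‖deriv (wFn σ θ) ξ‖ ≤ ‖(Icc (4:ℝ) (ALim θ)).indicator (fun _ => σ) ξ‖ := by
  by_cases hmem : ξ ∈ Icc (4:ℝ) (ALim θ)
  · rw [indicator_of_mem hmem]
    have h := norm_deriv_le_of_lipschitz (wFn_lipschitz hσ (by linarith)) (x₀ := ξ)
    rw [Real.coe_toNNReal _ (by linarith)] at h
    rw [Real.norm_eq_abs σ, abs_of_nonneg (by linarith)]
    exact h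
  · rw [indicator_of_notMem hmem, deriv_wFn_zero_outside hθ hmem, norm_zero]

lemma memLp_deriv_wFn {σ θ : ℝ} (hσ : 1 ≤ σ) (hθ : 1 < θ) (ρ : ENNReal) :
    MeasureTheory.MemLp (deriv (wFn σ θ)) ρ volume := by
  refine MemLp.of_le (memLp_indicator_const ρ measurableSet_Icc σ
    (Or.inr (measure_Icc_lt_top).ne)) ((measurable_deriv _).aestronglyMeasurable)
    (ae_of_all _ fun ξ => deriv_wFn_bound hσ hθ ξ)

lemma aSeq_three (θ : ℝ) : aSeq θ 3 = 4 + 4 * (2:ℝ) ^ (-θ) := by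
  have := aSeq_succ θ (n := 2) (by omega)
  rw [aSeq_two] at this
  simpa using this

lemma deriv_wFn_ramp {σ θ ξ : ℝ} (hξ1 : 4 < ξ) (hξ2 : ξ < 4 + (2:ℝ) ^ (-θ)) :
    deriv (wFn σ θ) ξ = σ * (ξ - 4) ^ (σ - 1) := by
  have hp2 : (0:ℝ) < (2:ℝ) ^ (-θ) := Real.rpow_pos_of_pos (by norm_num) _
  have hEv : wFn σ θ =ᶠ[nhds ξ] fun x => (x - 4) ^ σ := by
    filter_upwards [isOpen_Ioo.mem_nhds (⟨hξ1, hξ2⟩ : ξ ∈ Ioo 4 (4 + (2:ℝ) ^ (-θ)))] with y hy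
    rw [wFn_eq_piece σ θ (le_refl 2) (by rw [aSeq_two]; exact hy.1.le)
      (by rw [show (2:ℕ)+1 = 3 from rfl, aSeq_three]; push_cast; nlinarith [hy.2])]
    rw [wPiece, if_pos (by rw [aSeq_two]; push_cast; exact hy.2), aSeq_two]
  have h1 : HasDerivAt (fun x : ℝ => x - 4) 1 ξ := (hasDerivAt_id ξ).sub_const 4
  have h2 := (Real.hasDerivAt_rpow_const
    (x := ξ - 4) (p := σ) (Or.inl (by linarith : ξ - 4 ≠ 0))).comp ξ h1
  have h3 : HasDerivAt (fun x : ℝ => (x - 4) ^ σ) (σ * (ξ - 4) ^ (σ - 1)) ξ := by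
    simpa [Function.comp_def] using h2
  exact (h3.congr_of_eventuallyEq hEv).deriv

lemma not_memLp_top {σ θ : ℝ} (hσ0 : 0 < σ) (hσ : σ < 1) (hθ : 1 < θ) :
    ¬ MeasureTheory.MemLp (deriv (wFn σ θ)) ⊤ volume := by
  intro hmem
  set f := deriv (wFn σ θ) with hf
  have hM : eLpNormEssSup f volume < ⊤ := by
    have := hmem.2
    rwa [eLpNorm_exponent_top] at this
  set C := (eLpNormEssSup f volume).toReal with hC
  have hC0 : 0 ≤ C := ENNReal.toReal_nonneg
  have h_ae : ∀ᵐ ξ : ℝ, ‖f ξ‖ ≤ C := by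
    filter_upwards [ae_le_eLpNormEssSup (f := f) (μ := volume)] with ξ hξ
    have := ENNReal.toReal_mono hM.ne hξ
    simpa using this
  have hp2 : (0:ℝ) < (2:ℝ) ^ (-θ) := Real.rpow_pos_of_pos (by norm_num) _
  set s := min ((2:ℝ) ^ (-θ)) ((σ / (C + 1)) ^ (1 - σ)⁻¹) with hs
  have hq : (0:ℝ) < (σ / (C + 1)) ^ (1 - σ)⁻¹ := Real.rpow_pos_of_pos (by positivity) _
  have hs0 : 0 < s := lt_min hp2 hq
  have key : ∀ ξ ∈ Ioo (4:ℝ) (4 + s), ¬ ‖f ξ‖ ≤ C := by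
    intro ξ hξ
    have hu0 : 0 < ξ - 4 := by have := hξ.1; linarith
    have hus : ξ - 4 < s := by have := hξ.2; linarith
    rw [hf, deriv_wFn_ramp hξ.1 (by have := min_le_left ((2:ℝ) ^ (-θ)) ((σ / (C + 1)) ^ (1 - σ)⁻¹); linarith [hξ.2])]
    have h1 : (ξ - 4) ^ (1 - σ) < σ / (C + 1) := by
      have ha : (ξ - 4) ^ (1 - σ) < s ^ (1 - σ) :=
        Real.rpow_lt_rpow hu0.le hus (by linarith)
      have hb : s ^ (1 - σ) ≤ ((σ / (C + 1)) ^ (1 - σ)⁻¹) ^ (1 - σ) :=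
        Real.rpow_le_rpow hs0.le (min_le_right _ _) (by linarith)
      rw [Real.rpow_inv_rpow (by positivity) (by linarith : (1:ℝ) - σ ≠ 0)] at hb
      exact lt_of_lt_of_le ha hb
    have h2 : (ξ - 4) ^ (σ - 1) = ((ξ - 4) ^ (1 - σ))⁻¹ := by
      rw [← Real.rpow_neg hu0.le]; congr 1; ring
    have hpow : 0 < (ξ - 4) ^ (1 - σ) := Real.rpow_pos_of_pos hu0 _
    have h3 : C + 1 < σ * ((ξ - 4) ^ (1 - σ))⁻¹ := by
      rw [← div_eq_mul_inv, lt_div_iff₀ hpow, mul_comm]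
      exact (lt_div_iff₀ (by positivity : (0:ℝ) < C + 1)).1 h1
    intro hle
    rw [Real.norm_eq_abs, abs_of_nonneg (by positivity), h2] at hle
    linarith
  have hnull : volume {ξ : ℝ | ¬ ‖f ξ‖ ≤ C} = 0 := h_ae
  have hsub : Ioo (4:ℝ) (4 + s) ⊆ {ξ : ℝ | ¬ ‖f ξ‖ ≤ C} := fun ξ hξ => key ξ hξ
  have := measure_mono_null hsub hnull
  rw [Real.volume_Ioo] at this
  simp only [add_sub_cancel_left] at this
  rw [ENNReal.ofReal_eq_zero] at this
  linarith

/-- If σ ≥ 1 then w'_{σ,θ} ∈ L_ρ(ℝ) for all 0 < ρ ≤ ∞; moreover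
‖w'_{σ,θ}‖_{L_∞} < ∞ if and only if σ ≥ 1. -/
theorem stmt6 (σ θ : ℝ) (hσ : 0 < σ) (hθ : 1 < θ) :
    (1 ≤ σ → ∀ ρ : ENNReal, 0 < ρ →
      MeasureTheory.MemLp (deriv (wFn σ θ)) ρ volume) ∧
    (MeasureTheory.MemLp (deriv (wFn σ θ)) ⊤ volume ↔ 1 ≤ σ) := by
  constructor
  · intro hσ1 ρ _
    exact memLp_deriv_wFn hσ1 hθ ρ
  · constructor
    · intro hmem
      by_contra hlt
      push_neg at hlt
      exact not_memLp_top hσ hlt hθ hmem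
    · intro hσ1
      exact memLp_deriv_wFn hσ1 hθ ⊤
end

section
/- For 0 < σ < 1 < θ, the function w_{σ,θ} is Hölder continuous of order σ with constant 2: |w_{σ,θ}(x) − w_{σ,θ}(y)| ≤ 2|x−y|^σ for all x, y ∈ ℝ. -/
open MeasureTheory Real Set

/-- The "clamp" profile whose σ-power is the bump train. -/
noncomputable def clampFn (θ : ℝ) (n : ℕ) (ξ : ℝ) : ℝ :=
  max 0 (min (ξ - aSeq θ n) (min ((n : ℝ) ^ (-θ)) (aSeq θ n + 3 * (n : ℝ) ^ (-θ) - ξ)))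

open Classical in
noncomputable def gFn (θ : ℝ) (ξ : ℝ) : ℝ :=
  if h : ∃ n : ℕ, 2 ≤ n ∧ aSeq θ n ≤ ξ ∧ ξ < aSeq θ (n + 1) then clampFn θ h.choose ξ
  else 0

lemma interval_uniq (θ : ℝ) {n m : ℕ} {ξ : ℝ}
    (hn : 2 ≤ n ∧ aSeq θ n ≤ ξ ∧ ξ < aSeq θ (n + 1))
    (hm : 2 ≤ m ∧ aSeq θ m ≤ ξ ∧ ξ < aSeq θ (m + 1)) : n = m := by
  rcases lt_trichotomy n m with h | h | h
  · exact absurd (lt_of_le_of_lt (le_trans (aSeq_mono θ (by omega : n + 1 ≤ m)) hm.2.1)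
      hn.2.2) (lt_irrefl _)
  · exact h
  · exact absurd (lt_of_le_of_lt (le_trans (aSeq_mono θ (by omega : m + 1 ≤ n)) hn.2.1)
      hm.2.2) (lt_irrefl _)

open Classical in
lemma wFn_eq (σ θ : ℝ) {n : ℕ} {ξ : ℝ}
    (h : 2 ≤ n ∧ aSeq θ n ≤ ξ ∧ ξ < aSeq θ (n + 1)) :
    wFn σ θ ξ = wPiece σ θ n ξ := by
  have hex : ∃ n : ℕ, 2 ≤ n ∧ aSeq θ n ≤ ξ ∧ ξ < aSeq θ (n + 1) := ⟨n, h⟩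
  rw [wFn, dif_pos hex, interval_uniq θ hex.choose_spec h]

open Classical in
lemma gFn_eq (θ : ℝ) {n : ℕ} {ξ : ℝ}
    (h : 2 ≤ n ∧ aSeq θ n ≤ ξ ∧ ξ < aSeq θ (n + 1)) :
    gFn θ ξ = clampFn θ n ξ := by
  have hex : ∃ n : ℕ, 2 ≤ n ∧ aSeq θ n ≤ ξ ∧ ξ < aSeq θ (n + 1) := ⟨n, h⟩
  rw [gFn, dif_pos hex, interval_uniq θ hex.choose_spec h]

lemma gFn_nonneg (θ ξ : ℝ) : 0 ≤ gFn θ ξ := by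
  unfold gFn
  split
  · exact le_max_left _ _
  · exact le_refl 0

lemma wPiece_eq_clamp (σ θ : ℝ) (hσ0 : 0 < σ) {n : ℕ} {ξ : ℝ}
    (hξ : aSeq θ n ≤ ξ) :
    wPiece σ θ n ξ = clampFn θ n ξ ^ σ := by
  set a := aSeq θ n with ha
  set h := (n : ℝ) ^ (-θ) with hh
  have hh0 : 0 ≤ h := Real.rpow_nonneg (Nat.cast_nonneg n) _
  unfold wPiece clampFn
  rw [← ha, ← hh]
  split_ifs with c1 c2 c3
  · -- first ramp: clamp = ξ - a
    congr 1
    rw [show min h (a + 3 * h - ξ) = h from min_eq_left (by linarith),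
      min_eq_left (by linarith), max_eq_right (by linarith)]
  · -- plateau: clamp = h
    rw [show min h (a + 3 * h - ξ) = h from min_eq_left (by linarith),
      min_eq_right (by linarith), max_eq_right hh0]
    rw [show -(θ * σ) = (-θ) * σ by ring, Real.rpow_mul (Nat.cast_nonneg n)]
  · -- second ramp: clamp = a + 3h - ξ
    congr 1
    rw [show min h (a + 3 * h - ξ) = a + 3 * h - ξ from min_eq_right (by linarith),
      min_eq_right (by linarith), max_eq_right (by linarith)]
  · -- zero part
    rw [show max 0 (min (ξ - a) (min h (a + 3 * h - ξ))) = 0 from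
      max_eq_left (le_trans (le_trans (min_le_right _ _) (min_le_right _ _)) (by linarith)),
      Real.zero_rpow (ne_of_gt hσ0)]

lemma clamp_lip (θ : ℝ) (n : ℕ) (x y : ℝ) :
    clampFn θ n x ≤ clampFn θ n y + |x - y| := by
  set a := aSeq θ n
  set h := (n : ℝ) ^ (-θ)
  have h1 : x - y ≤ |x - y| := le_abs_self _
  have h2 : y - x ≤ |x - y| := by rw [abs_sub_comm]; exact le_abs_self _
  unfold clampFn
  refine max_le (add_nonneg (le_max_left _ _) (abs_nonneg _)) ?_
  refine le_trans ?_ (add_le_add (le_max_right 0 _) le_rfl)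
  have e1 : min (x - a) (min h (a + 3 * h - x)) ≤ x - a := min_le_left _ _
  have e2 : min (x - a) (min h (a + 3 * h - x)) ≤ h :=
    le_trans (min_le_right _ _) (min_le_left _ _)
  have e3 : min (x - a) (min h (a + 3 * h - x)) ≤ a + 3 * h - x :=
    le_trans (min_le_right _ _) (min_le_right _ _)
  have : min (x - a) (min h (a + 3 * h - x)) - |x - y| ≤
      min (y - a) (min h (a + 3 * h - y)) :=
    le_min (by linarith) (le_min (by linarith [abs_nonneg (x - y)]) (by linarith))
  linarith

lemma gFn_lip (θ : ℝ) (x y : ℝ) : gFn θ x ≤ gFn θ y + |x - y| := by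
  by_cases hx : ∃ n : ℕ, 2 ≤ n ∧ aSeq θ n ≤ x ∧ x < aSeq θ (n + 1)
  · obtain ⟨n, hn⟩ := hx
    rw [gFn_eq θ hn]
    have hn1 : 1 ≤ n := by omega
    have hsucc := aSeq_succ θ hn1
    set a := aSeq θ n with ha
    set h := (n : ℝ) ^ (-θ) with hh
    have hh0 : 0 ≤ h := Real.rpow_nonneg (Nat.cast_nonneg n) _
    have h1 : x - y ≤ |x - y| := le_abs_self _
    have h2 : y - x ≤ |x - y| := by rw [abs_sub_comm]; exact le_abs_self _
    have e3 : min (x - a) (min h (a + 3 * h - x)) ≤ a + 3 * h - x :=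
      le_trans (min_le_right _ _) (min_le_right _ _)
    have e1 : min (x - a) (min h (a + 3 * h - x)) ≤ x - a := min_le_left _ _
    by_cases hy1 : y < a
    · -- y left of the interval
      have : clampFn θ n x ≤ x - a := by
        unfold clampFn; rw [← ha, ← hh]
        exact max_le (by linarith [hn.2.1]) e1
      have := gFn_nonneg θ y
      linarith [hn.2.1]
    · by_cases hy2 : y < aSeq θ (n + 1)
      · -- same interval
        rw [gFn_eq θ ⟨hn.1, le_of_not_gt hy1, hy2⟩]
        exact clamp_lip θ n x y
      · -- y right of the interval
        push_neg at hy1 hy2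
        have hx2 : x < a + 4 * h := by rw [ha, hh, ← hsucc]; exact hn.2.2
        have hy2' : a + 4 * h ≤ y := by rw [ha, hh, ← hsucc]; exact hy2
        have : clampFn θ n x ≤ a + 4 * h - x := by
          unfold clampFn; rw [← ha, ← hh]
          exact max_le (by linarith) (by linarith)
        have := gFn_nonneg θ y
        linarith
  · rw [gFn, dif_neg hx]
    have := gFn_nonneg θ y
    have := abs_nonneg (x - y)
    linarith

lemma wFn_eq_gFn_rpow (σ θ : ℝ) (hσ0 : 0 < σ) (ξ : ℝ) :
    wFn σ θ ξ = gFn θ ξ ^ σ := by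
  by_cases hx : ∃ n : ℕ, 2 ≤ n ∧ aSeq θ n ≤ ξ ∧ ξ < aSeq θ (n + 1)
  · obtain ⟨n, hn⟩ := hx
    rw [wFn_eq σ θ hn, gFn_eq θ hn, wPiece_eq_clamp σ θ hσ0 hn.2.1]
  · rw [wFn, dif_neg hx, gFn, dif_neg hx, Real.zero_rpow (ne_of_gt hσ0)]

lemma rpow_holder (σ : ℝ) (hσ0 : 0 < σ) (hσ1 : σ < 1) {a b : ℝ}
    (ha : 0 ≤ a) (hb : 0 ≤ b) : a ^ σ ≤ b ^ σ + |a - b| ^ σ := by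
  have key : ∀ u v : ℝ, 0 ≤ u → 0 ≤ v → (u + v) ^ σ ≤ u ^ σ + v ^ σ := by
    intro u v hu hv
    have := NNReal.rpow_add_le_add_rpow ⟨u, hu⟩ ⟨v, hv⟩ hσ0.le hσ1.le
    have h2 := NNReal.coe_le_coe.2 this
    push_cast at h2
    convert h2 using 2 <;> rfl
  have hab : a ≤ b + |a - b| := by
    have := le_abs_self (a - b); linarith
  calc a ^ σ ≤ (b + |a - b|) ^ σ := Real.rpow_le_rpow ha hab hσ0.le
    _ ≤ b ^ σ + |a - b| ^ σ := key b _ hb (abs_nonneg _)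

/-- For 0 < σ < 1 < θ, w_{σ,θ} is σ-Hölder with constant 2:
|w_{σ,θ}(x) − w_{σ,θ}(y)| ≤ 2|x−y|^σ. -/
theorem stmt8 (σ θ : ℝ) (hσ0 : 0 < σ) (hσ1 : σ < 1) (hθ : 1 < θ) :
    ∀ x y : ℝ, |wFn σ θ x - wFn σ θ y| ≤ 2 * |x - y| ^ σ := by
  intro x y
  rw [wFn_eq_gFn_rpow σ θ hσ0 x, wFn_eq_gFn_rpow σ θ hσ0 y]
  have hgx := gFn_nonneg θ x
  have hgy := gFn_nonneg θ y
  have hdist : |gFn θ x - gFn θ y| ≤ |x - y| := by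
    rw [abs_sub_le_iff]
    constructor
    · have := gFn_lip θ x y; linarith
    · have := gFn_lip θ y x; rw [abs_sub_comm] at this; linarith
  have step : |gFn θ x ^ σ - gFn θ y ^ σ| ≤ |gFn θ x - gFn θ y| ^ σ := by
    rw [abs_sub_le_iff]
    constructor
    · have := rpow_holder σ hσ0 hσ1 hgx hgy; linarith
    · have := rpow_holder σ hσ0 hσ1 hgy hgx
      rw [abs_sub_comm] at this; linarith
  calc |gFn θ x ^ σ - gFn θ y ^ σ| ≤ |gFn θ x - gFn θ y| ^ σ := step
    _ ≤ |x - y| ^ σ := Real.rpow_le_rpow (abs_nonneg _) hdist hσ0.le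
    _ ≤ 2 * |x - y| ^ σ := by
        have : 0 ≤ |x - y| ^ σ := Real.rpow_nonneg (abs_nonneg _) _
        linarith
end
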